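/- Let 0 < p, θ < 1 and 0 < q < 1 satisfy d(q‖p) = d(p_θ‖p), where p_θ = p^θ/(p^θ + (1-p)^θ). Then h(p_θ) - h(q) = d(q‖p_θ)/(1-θ). In particular h(p_θ) ≥ h(q), with equality iff q = p_θ. -/

import Mathlib

/-- Binary entropy in nats. -/
noncomputable def hNat (q : ℝ) : ℝ := -(q * Real.log q) - (1 - q) * Real.log (1 - q)

/-- Binary relative entropy in nats. -/
noncomputable def dNat (q p : ℝ) : ℝ :=
  q * Real.log (q / p) + (1 - q) * Real.log ((1 - q) / (1 - p))

/-- The exponential family `p_θ = p^θ/(p^θ + (1-p)^θ)`. -/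
noncomputable def pTheta (p θ : ℝ) : ℝ := p ^ θ / (p ^ θ + (1 - p) ^ θ)

lemma dNat_expand (q s : ℝ) (hq0 : 0 < q) (hq1 : q < 1) (hs0 : 0 < s) (hs1 : s < 1) :
    dNat q s = -hNat q - q * Real.log s - (1 - q) * Real.log (1 - s) := by
  unfold dNat hNat
  rw [Real.log_div (ne_of_gt hq0) (ne_of_gt hs0),
    Real.log_div (by linarith) (by linarith)]
  ring

lemma dNat_self (s : ℝ) : dNat s s = 0 := by
  unfold dNat
  rcases eq_or_ne s 0 with h | h
  · simp [h]
  rcases eq_or_ne s 1 with h1 | h1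
  · simp [h1]
  rw [div_self h, div_self (by intro hh; apply h1; linarith)]
  simp

lemma dNat_nonneg (q s : ℝ) (hq0 : 0 < q) (hq1 : q < 1) (hs0 : 0 < s) (hs1 : s < 1) :
    0 ≤ dNat q s ∧ (dNat q s = 0 ↔ q = s) := by
  rcases eq_or_ne q s with h | h
  · subst h; simp [dNat_self]
  have key : 0 < dNat q s := by
    have h1 : Real.log (s / q) < s / q - 1 := by
      apply Real.log_lt_sub_one_of_pos (by positivity)
      intro hh
      apply h
      field_simp at hh
      linarith
    have h2 : Real.log ((1 - s) / (1 - q)) ≤ (1 - s) / (1 - q) - 1 :=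
      Real.log_le_sub_one_of_pos (by apply div_pos <;> linarith)
    have e1 : Real.log (q / s) = -Real.log (s / q) := by
      rw [← Real.log_inv]; congr 1; field_simp
    have e4 : Real.log ((1 - q) / (1 - s)) = -Real.log ((1 - s) / (1 - q)) := by
      rw [← Real.log_inv]; congr 1
      rw [inv_div]
    have e2 : q * (s / q - 1) = s - q := by field_simp
    have e3 : (1 - q) * ((1 - s) / (1 - q) - 1) = (1 - s) - (1 - q) := by
      have hne : (1 : ℝ) - q ≠ 0 := by linarith
      field_simp
    have h1' : q * Real.log (s / q) < s - q := by
      calc q * Real.log (s / q) < q * (s / q - 1) := by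
            apply mul_lt_mul_of_pos_left h1 hq0
        _ = s - q := e2
    have h2' : (1 - q) * Real.log ((1 - s) / (1 - q)) ≤ q - s := by
      calc (1 - q) * Real.log ((1 - s) / (1 - q)) ≤ (1 - q) * ((1 - s) / (1 - q) - 1) := by
            apply mul_le_mul_of_nonneg_left h2 (by linarith)
        _ = q - s := by rw [e3]; ring
    unfold dNat
    rw [e1, e4]
    nlinarith
  exact ⟨le_of_lt key, by constructor <;> intro hh <;> [linarith; exact absurd hh h]⟩

theorem stmt16 (p θ q : ℝ) (hp0 : 0 < p) (hp1 : p < 1) (hθ0 : 0 < θ) (hθ1 : θ < 1)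
    (hq0 : 0 < q) (hq1 : q < 1) (hd : dNat q p = dNat (pTheta p θ) p) :
    hNat (pTheta p θ) - hNat q = dNat q (pTheta p θ) / (1 - θ) ∧
    hNat q ≤ hNat (pTheta p θ) ∧
    (hNat (pTheta p θ) = hNat q ↔ q = pTheta p θ) := by
  have hpt : 0 < p ^ θ := Real.rpow_pos_of_pos hp0 θ
  have hmt : 0 < (1 - p) ^ θ := Real.rpow_pos_of_pos (by linarith) θ
  have hZpos : 0 < p ^ θ + (1 - p) ^ θ := add_pos hpt hmt
  have hr0 : 0 < pTheta p θ := div_pos hpt hZpos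
  have hr1 : pTheta p θ < 1 := by
    unfold pTheta; rw [div_lt_one hZpos]; linarith
  have h1mr : 1 - pTheta p θ = (1 - p) ^ θ / (p ^ θ + (1 - p) ^ θ) := by
    unfold pTheta; field_simp; ring
  have hlogr : Real.log (pTheta p θ) =
      θ * Real.log p - Real.log (p ^ θ + (1 - p) ^ θ) := by
    unfold pTheta
    rw [Real.log_div (ne_of_gt hpt) (ne_of_gt hZpos), Real.log_rpow hp0]
  have hlog1mr : Real.log (1 - pTheta p θ) =
      θ * Real.log (1 - p) - Real.log (p ^ θ + (1 - p) ^ θ) := by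
    rw [h1mr, Real.log_div (ne_of_gt hmt) (ne_of_gt hZpos), Real.log_rpow (by linarith)]
  set r := pTheta p θ with hr
  have eq1 : dNat q p = -hNat q - q * Real.log p - (1 - q) * Real.log (1 - p) :=
    dNat_expand q p hq0 hq1 hp0 hp1
  have eq2 : dNat r p = -hNat r - r * Real.log p - (1 - r) * Real.log (1 - p) :=
    dNat_expand r p hr0 hr1 hp0 hp1
  have eq3 : dNat q r = -hNat q - q * Real.log r - (1 - q) * Real.log (1 - r) :=
    dNat_expand q r hq0 hq1 hr0 hr1
  have eq4 : dNat r r = -hNat r - r * Real.log r - (1 - r) * Real.log (1 - r) :=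
    dNat_expand r r hr0 hr1 hr0 hr1
  have hrr : dNat r r = 0 := dNat_self r
  set L1 := Real.log p
  set L2 := Real.log (1 - p)
  set LZ := Real.log (p ^ θ + (1 - p) ^ θ)
  rw [hlogr, hlog1mr] at eq3 eq4
  have hLZ : LZ = hNat r + θ * (r * L1 + (1 - r) * L2) := by
    linear_combination hrr - eq4
  have hdiff : r * L1 + (1 - r) * L2 - (q * L1 + (1 - q) * L2) = hNat q - hNat r := by
    linear_combination hd - eq1 + eq2
  have hkey : dNat q r = (1 - θ) * (hNat r - hNat q) := by
    linear_combination eq3 + hLZ + θ * hdiff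
  obtain ⟨hnn, hiff⟩ := dNat_nonneg q r hq0 hq1 hr0 hr1
  have hθ' : 0 < 1 - θ := by linarith
  refine ⟨?_, ?_, ?_⟩
  · rw [hkey, mul_div_cancel_left₀ _ (ne_of_gt hθ')]
  · nlinarith
  · constructor
    · intro hh
      apply hiff.mp
      rw [hkey, hh]; ring
    · intro hh
      have h0 := hiff.mpr hh
      rw [hkey] at h0
      rcases mul_eq_zero.mp h0 with h | h
      · linarith
      · linarith
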